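/- If 1/2 ≤ a ≤ 1, 0 < σ₁ < 1, σ₂ > 1, and 1 < σ₁ + σ₂ < 2, then the analytically continued Euler–Zagier double zeta value ζ₂(σ₁,σ₂; a) is negative, where Γ(σ₁)Γ(σ₂)ζ₂(σ₁,σ₂;a) = ∫_0^∞∫_0^∞ [ (y^{σ₂-1}/(e^y−1))H(a,x+y)x^{σ₁-1} + (x^{σ₁-1}/(x+y))H(1,y)y^{σ₂-1} ] dx dy. -/

import Mathlib

open MeasureTheory Set

section DoubleHurwitzAux

lemma dhz_exp_sub_one_pos {t : ℝ} (ht : 0 < t) : (0:ℝ) < Real.exp t - 1 := by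
  have := Real.one_lt_exp_iff.mpr ht; linarith

lemma dhz_H_neg {a t : ℝ} (ha : 1/2 ≤ a) (ht : 0 < t) :
    Real.exp ((1-a)*t) / (Real.exp t - 1) - 1/t < 0 := by
  have he := dhz_exp_sub_one_pos ht
  rw [sub_neg, div_lt_div_iff₀ he ht, one_mul]
  have h1 : Real.exp ((1-a)*t) ≤ Real.exp (t/2) := by
    apply Real.exp_le_exp.mpr; nlinarith
  have h2 : t < Real.exp (t/2) - Real.exp (-(t/2)) := by
    have := Real.self_lt_sinh_iff (x := t/2) |>.mpr (by linarith)
    rw [Real.sinh_eq] at this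
    linarith
  have h3 : Real.exp (t/2) * (Real.exp (t/2) - Real.exp (-(t/2))) = Real.exp t - 1 := by
    rw [mul_sub, ← Real.exp_add, ← Real.exp_add]; norm_num
  have hp : (0:ℝ) < Real.exp (t/2) := Real.exp_pos _
  calc Real.exp ((1-a)*t) * t ≤ Real.exp (t/2) * t := by nlinarith
    _ < Real.exp (t/2) * (Real.exp (t/2) - Real.exp (-(t/2))) := by nlinarith
    _ = Real.exp t - 1 := h3

lemma dhz_H_ge_neg_inv {a t : ℝ} (ht : 0 < t) :
    -(1/t) ≤ Real.exp ((1-a)*t) / (Real.exp t - 1) - 1/t := by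
  have he := dhz_exp_sub_one_pos ht
  have : 0 < Real.exp ((1-a)*t) / (Real.exp t - 1) := div_pos (Real.exp_pos _) he
  linarith

lemma dhz_H_ge_neg_one {a t : ℝ} (ha1 : a ≤ 1) (ht : 0 < t) :
    -1 ≤ Real.exp ((1-a)*t) / (Real.exp t - 1) - 1/t := by
  have he := dhz_exp_sub_one_pos ht
  have h1 : (1:ℝ) ≤ Real.exp ((1-a)*t) := by
    rw [Real.one_le_exp_iff]; nlinarith
  have h2 : 1/(Real.exp t - 1) ≤ Real.exp ((1-a)*t) / (Real.exp t - 1) := by gcongr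
  have h3 : 1/t - 1/(Real.exp t - 1) ≤ 1 := by
    rw [div_sub_div _ _ (ne_of_gt ht) (ne_of_gt he), div_le_one (by positivity)]
    have h4 : 1 - t ≤ Real.exp (-t) := by linarith [Real.add_one_le_exp (-t)]
    have h5 : Real.exp t * Real.exp (-t) = 1 := by rw [← Real.exp_add]; simp
    nlinarith [Real.exp_pos t]
  linarith

lemma dhz_H_abs_le {a t : ℝ} (ha : 1/2 ≤ a) (ha1 : a ≤ 1) (ht : 0 < t) :
    |Real.exp ((1-a)*t) / (Real.exp t - 1) - 1/t| ≤ min 1 t⁻¹ := by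
  rw [abs_le]
  constructor
  · rcases le_total (1:ℝ) t⁻¹ with h | h
    · rw [min_eq_left h]; exact dhz_H_ge_neg_one ha1 ht
    · rw [min_eq_right h, ← one_div]; exact dhz_H_ge_neg_inv ht
  · have : min (1:ℝ) t⁻¹ ≥ 0 := le_min zero_le_one (by positivity)
    linarith [dhz_H_neg ha ht]

lemma dhz_rpow_int_Ioc {p : ℝ} (hp : -1 < p) : IntegrableOn (fun x : ℝ => x ^ p) (Ioc 0 1) := by
  have := intervalIntegral.intervalIntegrable_rpow' (r := p) (a := 0) (b := 1) hp
  rwa [intervalIntegrable_iff_integrableOn_Ioc_of_le zero_le_one] at this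

lemma dhz_my_mono {f g : ℝ → ℝ} {s : Set ℝ} (hs : MeasurableSet s)
    (hg : IntegrableOn g s) (hf : AEStronglyMeasurable f (volume.restrict s))
    (h : ∀ x ∈ s, ‖f x‖ ≤ g x) : IntegrableOn f s :=
  hg.mono' hf ((ae_restrict_iff' hs).mpr (ae_of_all _ h))

lemma dhz_phi1_int (σ₁ : ℝ) (hσ₁0 : 0 < σ₁) (hσ₁1 : σ₁ < 1) :
    IntegrableOn (fun x : ℝ => x ^ (σ₁ - 1) * min 1 x⁻¹) (Ioi 0) := by
  rw [← Ioc_union_Ioi_eq_Ioi (zero_le_one' ℝ), integrableOn_union]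
  constructor
  · apply (dhz_rpow_int_Ioc (p := σ₁ - 1) (by linarith)).congr_fun ?_ measurableSet_Ioc
    intro x hx
    have h1 : (1:ℝ) ≤ x⁻¹ := by rw [le_inv_comm₀] <;> simp_all [hx.1, hx.2]
    show x ^ (σ₁ - 1) = x ^ (σ₁ - 1) * min 1 x⁻¹
    rw [min_eq_left h1, mul_one]
  · apply (integrableOn_Ioi_rpow_of_lt (a := σ₁ - 2) (by linarith) one_pos).congr_fun ?_
      measurableSet_Ioi
    intro x hx
    have hx0 : (0:ℝ) < x := lt_trans one_pos hx
    have h1 : x⁻¹ ≤ 1 := by rw [inv_le_one_iff₀]; right; exact le_of_lt hx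
    show x ^ (σ₁ - 2) = x ^ (σ₁ - 1) * min 1 x⁻¹
    rw [min_eq_right h1, ← Real.rpow_neg_one x, ← Real.rpow_add hx0]
    ring_nf

lemma dhz_phi2_int (p q : ℝ) (hp : -1 < p) (hq : q < -1) :
    IntegrableOn (fun x : ℝ => if x ≤ 1 then x ^ p else x ^ q) (Ioi 0) := by
  rw [← Ioc_union_Ioi_eq_Ioi (zero_le_one' ℝ), integrableOn_union]
  constructor
  · apply (dhz_rpow_int_Ioc hp).congr_fun ?_ measurableSet_Ioc
    intro x hx; simp [hx.2]
  · apply (integrableOn_Ioi_rpow_of_lt hq one_pos).congr_fun ?_ measurableSet_Ioi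
    intro x hx; simp [not_le.mpr (show (1:ℝ) < x from hx)]

lemma dhz_psi2_int (p q σ₂ : ℝ) (h1 : -1 < p + σ₂ - 2) (h2 : -1 < q + σ₂ - 2)
    (h3 : p + σ₂ - 3 < -1) (h4 : q + σ₂ - 3 < -1) :
    IntegrableOn (fun y : ℝ => (y ^ (p - 1) + y ^ (q - 1)) * min 1 y⁻¹ * y ^ (σ₂ - 1))
      (Ioi 0) := by
  rw [← Ioc_union_Ioi_eq_Ioi (zero_le_one' ℝ), integrableOn_union]
  constructor
  · apply IntegrableOn.congr_fun (f := fun y : ℝ => y ^ (p + σ₂ - 2) + y ^ (q + σ₂ - 2))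
      ((dhz_rpow_int_Ioc h1).add (dhz_rpow_int_Ioc h2)) ?_ measurableSet_Ioc
    intro y hy
    have hy0 := hy.1
    have hm : min (1:ℝ) y⁻¹ = 1 := min_eq_left (by
      rw [le_inv_comm₀ one_pos hy0]; simpa using hy.2)
    show y ^ (p + σ₂ - 2) + y ^ (q + σ₂ - 2)
        = (y ^ (p - 1) + y ^ (q - 1)) * min 1 y⁻¹ * y ^ (σ₂ - 1)
    rw [hm, mul_one, add_mul, ← Real.rpow_add hy0, ← Real.rpow_add hy0]
    ring_nf
  · apply IntegrableOn.congr_fun (f := fun y : ℝ => y ^ (p + σ₂ - 3) + y ^ (q + σ₂ - 3))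
      ((integrableOn_Ioi_rpow_of_lt h3 one_pos).add
        (integrableOn_Ioi_rpow_of_lt h4 one_pos)) ?_ measurableSet_Ioi
    intro y hy
    have hy0 : (0:ℝ) < y := lt_trans one_pos hy
    have hm : min (1:ℝ) y⁻¹ = y⁻¹ := min_eq_right (by
      rw [inv_le_one_iff₀]; right; exact le_of_lt hy)
    show y ^ (p + σ₂ - 3) + y ^ (q + σ₂ - 3)
        = (y ^ (p - 1) + y ^ (q - 1)) * min 1 y⁻¹ * y ^ (σ₂ - 1)
    rw [hm, ← Real.rpow_neg_one y, add_mul, add_mul, ← Real.rpow_add hy0, ← Real.rpow_add hy0,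
      ← Real.rpow_add hy0, ← Real.rpow_add hy0]
    ring_nf

lemma dhz_psi1_int (σ₂ : ℝ) (hσ₂1 : 1 < σ₂) (hσ₂2 : σ₂ < 2) :
    IntegrableOn (fun y : ℝ => y ^ (σ₂ - 1) * (Real.exp y - 1)⁻¹) (Ioi 0) := by
  have hmeas : Measurable (fun y : ℝ => y ^ (σ₂ - 1) * (Real.exp y - 1)⁻¹) := by
    fun_prop
  rw [← Ioc_union_Ioi_eq_Ioi (zero_le_one' ℝ), integrableOn_union]
  constructor
  · apply dhz_my_mono measurableSet_Ioc (dhz_rpow_int_Ioc (p := σ₂ - 2) (by linarith))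
      hmeas.aestronglyMeasurable
    intro y hy
    have hy0 := hy.1
    have he := dhz_exp_sub_one_pos hy0
    have h1 : (Real.exp y - 1)⁻¹ ≤ y⁻¹ := by
      apply inv_anti₀ hy0
      linarith [Real.add_one_le_exp y]
    rw [Real.norm_eq_abs, abs_of_nonneg (by positivity)]
    calc y ^ (σ₂ - 1) * (Real.exp y - 1)⁻¹ ≤ y ^ (σ₂ - 1) * y⁻¹ := by
          apply mul_le_mul_of_nonneg_left h1 (by positivity)
      _ = y ^ (σ₂ - 2) := by
          rw [← Real.rpow_neg_one y, ← Real.rpow_add hy0]; ring_nf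
  · have hG : IntegrableOn (fun y : ℝ => Real.exp (-y) * y ^ (σ₂ - 1)) (Ioi 1) :=
      (Real.GammaIntegral_convergent (by linarith : (0:ℝ) < σ₂)).mono_set
        (Ioi_subset_Ioi zero_le_one)
    apply dhz_my_mono measurableSet_Ioi (hG.const_mul (1 - Real.exp (-1))⁻¹)
      hmeas.aestronglyMeasurable
    intro y hy
    have hy1 : (1:ℝ) < y := hy
    have hy0 : (0:ℝ) < y := lt_trans one_pos hy
    have hc : (0:ℝ) < 1 - Real.exp (-1) := by
      have : Real.exp (-1) < 1 := by
        rw [Real.exp_lt_one_iff]; norm_num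
      linarith
    have he : Real.exp y * (1 - Real.exp (-1)) ≤ Real.exp y - 1 := by
      have h1 : (1:ℝ) ≤ Real.exp (y - 1) := by
        rw [Real.one_le_exp_iff]; linarith
      have h2 : Real.exp y * Real.exp (-1) = Real.exp (y - 1) := by
        rw [← Real.exp_add]; ring_nf
      nlinarith [Real.exp_pos y]
    have hepos := dhz_exp_sub_one_pos hy0
    have h3 : (Real.exp y - 1)⁻¹ ≤ (1 - Real.exp (-1))⁻¹ * Real.exp (-y) := by
      rw [Real.exp_neg y, ← mul_inv]
      apply inv_anti₀ (by positivity)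
      linarith
    rw [Real.norm_eq_abs, abs_of_nonneg (by positivity)]
    calc y ^ (σ₂ - 1) * (Real.exp y - 1)⁻¹
        ≤ y ^ (σ₂ - 1) * ((1 - Real.exp (-1))⁻¹ * Real.exp (-y)) :=
          mul_le_mul_of_nonneg_left h3 (by positivity)
      _ = (1 - Real.exp (-1))⁻¹ * (Real.exp (-y) * y ^ (σ₂ - 1)) := by ring

lemma dhz_neg_integral {f : ℝ → ℝ} (hf : IntegrableOn f (Ioi 0))
    (hneg : ∀ x ∈ Ioi (0:ℝ), f x < 0) : (∫ x in Ioi (0:ℝ), f x) < 0 := by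
  have hnn : 0 ≤ᵐ[volume.restrict (Ioi (0:ℝ))] fun x => -f x :=
    (ae_restrict_iff' measurableSet_Ioi).mpr
      (ae_of_all _ fun x hx => le_of_lt (neg_pos.mpr (hneg x hx)))
  have h := (setIntegral_pos_iff_support_of_nonneg_ae hnn hf.neg).mpr ?_
  · rw [integral_neg] at h; linarith
  · have hsub : Ioi (0:ℝ) ⊆ Function.support (fun x => -f x) := fun x hx => by
      simp only [Function.mem_support, ne_eq, neg_eq_zero]
      exact ne_of_lt (hneg x hx)
    have : Function.support (fun x => -f x) ∩ Ioi 0 = Ioi 0 :=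
      inter_eq_self_of_subset_right hsub
    rw [this]
    simp [Real.volume_Ioi]

lemma dhz_outer_neg {F : ℝ → ℝ → ℝ} (hmeas : Measurable (fun p : ℝ × ℝ => F p.2 p.1))
    {φ1 φ2 ψ1 ψ2 : ℝ → ℝ}
    (hφ1 : IntegrableOn φ1 (Ioi 0)) (hφ2 : IntegrableOn φ2 (Ioi 0))
    (hψ1 : IntegrableOn ψ1 (Ioi 0)) (hψ2 : IntegrableOn ψ2 (Ioi 0))
    (hbound : ∀ x ∈ Ioi (0:ℝ), ∀ y ∈ Ioi (0:ℝ), |F x y| ≤ φ1 x * ψ1 y + φ2 x * ψ2 y)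
    (hneg : ∀ x ∈ Ioi (0:ℝ), ∀ y ∈ Ioi (0:ℝ), F x y < 0) :
    (∫ y in Ioi (0:ℝ), ∫ x in Ioi (0:ℝ), F x y) < 0 := by
  have hBint : ∀ y : ℝ, IntegrableOn (fun x => φ1 x * ψ1 y + φ2 x * ψ2 y) (Ioi 0) :=
    fun y => (hφ1.mul_const (ψ1 y)).add (hφ2.mul_const (ψ2 y))
  have hFymeas : ∀ y : ℝ, Measurable (fun x => F x y) := fun y =>
    hmeas.comp (measurable_const.prodMk measurable_id)
  have hFy_int : ∀ y ∈ Ioi (0:ℝ), IntegrableOn (fun x => F x y) (Ioi 0) := by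
    intro y hy
    apply dhz_my_mono measurableSet_Ioi (hBint y) (hFymeas y).aestronglyMeasurable
    intro x hx
    rw [Real.norm_eq_abs]
    exact hbound x hx y hy
  set g : ℝ → ℝ := fun y => ∫ x in Ioi (0:ℝ), F x y with hg
  have hgmeas : StronglyMeasurable g :=
    MeasureTheory.StronglyMeasurable.integral_prod_right
      (f := fun y x => F x y) (ν := volume.restrict (Ioi 0)) hmeas.stronglyMeasurable
  have hgneg : ∀ y ∈ Ioi (0:ℝ), g y < 0 := fun y hy =>
    dhz_neg_integral (hFy_int y hy) (fun x hx => hneg x hx y hy)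
  have hgint : IntegrableOn g (Ioi 0) := by
    apply dhz_my_mono measurableSet_Ioi
      (g := fun y => (∫ x in Ioi (0:ℝ), φ1 x) * ψ1 y + (∫ x in Ioi (0:ℝ), φ2 x) * ψ2 y)
      ((hψ1.const_mul _).add (hψ2.const_mul _)) hgmeas.aestronglyMeasurable
    intro y hy
    calc ‖g y‖ ≤ ∫ x in Ioi (0:ℝ), ‖F x y‖ := norm_integral_le_integral_norm _
      _ ≤ ∫ x in Ioi (0:ℝ), (φ1 x * ψ1 y + φ2 x * ψ2 y) := by
          apply setIntegral_mono_on (hFy_int y hy).norm (hBint y) measurableSet_Ioi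
          intro x hx
          rw [Real.norm_eq_abs]
          exact hbound x hx y hy
      _ = (∫ x in Ioi (0:ℝ), φ1 x) * ψ1 y + (∫ x in Ioi (0:ℝ), φ2 x) * ψ2 y := by
          rw [integral_add (hφ1.mul_const _) (hφ2.mul_const _), integral_mul_const,
            integral_mul_const]
  exact dhz_neg_integral hgint hgneg

end DoubleHurwitzAux

/-- If 1/2 ≤ a ≤ 1, 0 < σ₁ < 1, σ₂ > 1, 1 < σ₁ + σ₂ < 2, then the
analytically continued Euler–Zagier double zeta value ζ₂(σ₁,σ₂;a), given by
Γ(σ₁)Γ(σ₂)ζ₂(σ₁,σ₂;a) = ∫_0^∞∫_0^∞ [(y^{σ₂-1}/(e^y−1))H(a,x+y)x^{σ₁-1}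
  + (x^{σ₁-1}/(x+y))H(1,y)y^{σ₂-1}] dx dy, is negative. -/
theorem doubleHurwitzZeta_neg (a σ₁ σ₂ : ℝ) (ha : 1 / 2 ≤ a) (ha1 : a ≤ 1)
    (hσ₁0 : 0 < σ₁) (hσ₁1 : σ₁ < 1) (hσ₂ : 1 < σ₂)
    (hσ : 1 < σ₁ + σ₂) (hσ' : σ₁ + σ₂ < 2) (Z : ℝ)
    (hZ : Real.Gamma σ₁ * Real.Gamma σ₂ * Z
      = ∫ y in Ioi (0 : ℝ), ∫ x in Ioi (0 : ℝ),
          ((y ^ (σ₂ - 1) / (Real.exp y - 1))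
              * (Real.exp ((1 - a) * (x + y)) / (Real.exp (x + y) - 1) - 1 / (x + y))
              * x ^ (σ₁ - 1)
            + (x ^ (σ₁ - 1) / (x + y))
              * (Real.exp ((1 - 1) * y) / (Real.exp y - 1) - 1 / y)
              * y ^ (σ₂ - 1))) :
    Z < 0 := by
  set θ₁ : ℝ := σ₁ / 2 with hθ₁
  set θ₂ : ℝ := (σ₁ - σ₂ + 2) / 2 with hθ₂
  have hσ₂2 : σ₂ < 2 := by linarith
  have hθ₁0 : 0 < θ₁ := by rw [hθ₁]; linarith
  have hθ₁1 : θ₁ < 1 := by rw [hθ₁]; linarith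
  have hθ₂0 : 0 < θ₂ := by rw [hθ₂]; linarith
  have hθ₂1 : θ₂ < 1 := by rw [hθ₂]; linarith
  set F : ℝ → ℝ → ℝ := fun x y =>
    ((y ^ (σ₂ - 1) / (Real.exp y - 1))
        * (Real.exp ((1 - a) * (x + y)) / (Real.exp (x + y) - 1) - 1 / (x + y))
        * x ^ (σ₁ - 1)
      + (x ^ (σ₁ - 1) / (x + y))
        * (Real.exp ((1 - 1) * y) / (Real.exp y - 1) - 1 / y)
        * y ^ (σ₂ - 1)) with hF
  set φ1 : ℝ → ℝ := fun x => x ^ (σ₁ - 1) * min 1 x⁻¹ with hφ1def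
  set φ2 : ℝ → ℝ := fun x => if x ≤ 1 then x ^ (σ₁ - 1 - θ₁) else x ^ (σ₁ - 1 - θ₂) with hφ2def
  set ψ1 : ℝ → ℝ := fun y => y ^ (σ₂ - 1) * (Real.exp y - 1)⁻¹ with hψ1def
  set ψ2 : ℝ → ℝ := fun y => (y ^ (θ₁ - 1) + y ^ (θ₂ - 1)) * min 1 y⁻¹ * y ^ (σ₂ - 1)
    with hψ2def
  -- negativity of the integrand
  have hneg : ∀ x ∈ Ioi (0:ℝ), ∀ y ∈ Ioi (0:ℝ), F x y < 0 := by
    intro x hx y hy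
    have hx0 : (0:ℝ) < x := hx
    have hy0 : (0:ℝ) < y := hy
    have hxy : (0:ℝ) < x + y := by linarith
    have hey := dhz_exp_sub_one_pos hy0
    have hH1 : Real.exp ((1 - a) * (x + y)) / (Real.exp (x + y) - 1) - 1 / (x + y) < 0 :=
      dhz_H_neg ha hxy
    have hH2 : Real.exp ((1 - 1) * y) / (Real.exp y - 1) - 1 / y < 0 :=
      dhz_H_neg (by norm_num) hy0
    have hx1 : (0:ℝ) < x ^ (σ₁ - 1) := Real.rpow_pos_of_pos hx0 _
    have hy1 : (0:ℝ) < y ^ (σ₂ - 1) := Real.rpow_pos_of_pos hy0 _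
    have t1 : (y ^ (σ₂ - 1) / (Real.exp y - 1))
        * (Real.exp ((1 - a) * (x + y)) / (Real.exp (x + y) - 1) - 1 / (x + y))
        * x ^ (σ₁ - 1) < 0 :=
      mul_neg_of_neg_of_pos (mul_neg_of_pos_of_neg (div_pos hy1 hey) hH1) hx1
    have t2 : (x ^ (σ₁ - 1) / (x + y))
        * (Real.exp ((1 - 1) * y) / (Real.exp y - 1) - 1 / y) * y ^ (σ₂ - 1) < 0 :=
      mul_neg_of_neg_of_pos (mul_neg_of_pos_of_neg (div_pos hx1 hxy) hH2) hy1
    rw [hF]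
    dsimp only
    linarith
  -- bound on the integrand
  have hbound : ∀ x ∈ Ioi (0:ℝ), ∀ y ∈ Ioi (0:ℝ),
      |F x y| ≤ φ1 x * ψ1 y + φ2 x * ψ2 y := by
    intro x hx y hy
    have hx0 : (0:ℝ) < x := hx
    have hy0 : (0:ℝ) < y := hy
    have hxy : (0:ℝ) < x + y := by linarith
    have hey := dhz_exp_sub_one_pos hy0
    have hx1 : (0:ℝ) < x ^ (σ₁ - 1) := Real.rpow_pos_of_pos hx0 _
    have hy1 : (0:ℝ) < y ^ (σ₂ - 1) := Real.rpow_pos_of_pos hy0 _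
    have habs1 : |Real.exp ((1 - a) * (x + y)) / (Real.exp (x + y) - 1) - 1 / (x + y)|
        ≤ min 1 (x + y)⁻¹ := dhz_H_abs_le ha ha1 hxy
    have habs2 : |Real.exp ((1 - 1) * y) / (Real.exp y - 1) - 1 / y| ≤ min 1 y⁻¹ :=
      dhz_H_abs_le (by norm_num) (by norm_num) hy0
    have hminxy : min (1:ℝ) (x + y)⁻¹ ≤ min 1 x⁻¹ :=
      min_le_min le_rfl (inv_anti₀ hx0 (by linarith))
    -- term 1
    have hT1 : |(y ^ (σ₂ - 1) / (Real.exp y - 1))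
        * (Real.exp ((1 - a) * (x + y)) / (Real.exp (x + y) - 1) - 1 / (x + y))
        * x ^ (σ₁ - 1)| ≤ φ1 x * ψ1 y := by
      rw [abs_mul, abs_mul, abs_of_pos (div_pos hy1 hey), abs_of_pos hx1]
      calc (y ^ (σ₂ - 1) / (Real.exp y - 1))
            * |Real.exp ((1 - a) * (x + y)) / (Real.exp (x + y) - 1) - 1 / (x + y)|
            * x ^ (σ₁ - 1)
          ≤ (y ^ (σ₂ - 1) / (Real.exp y - 1)) * min 1 x⁻¹ * x ^ (σ₁ - 1) := by
            have : |Real.exp ((1 - a) * (x + y)) / (Real.exp (x + y) - 1) - 1 / (x + y)|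
                ≤ min 1 x⁻¹ := le_trans habs1 hminxy
            have hd : (0:ℝ) ≤ y ^ (σ₂ - 1) / (Real.exp y - 1) := le_of_lt (div_pos hy1 hey)
            exact mul_le_mul_of_nonneg_right (mul_le_mul_of_nonneg_left this hd) hx1.le
        _ = φ1 x * ψ1 y := by
            rw [hφ1def, hψ1def]; dsimp only; rw [div_eq_mul_inv]; ring
    -- term 2
    have θcase : ∃ θ, (0 < θ ∧ θ < 1) ∧
        (if x ≤ 1 then x ^ (σ₁ - 1 - θ₁) else x ^ (σ₁ - 1 - θ₂)) = x ^ (σ₁ - 1 - θ) ∧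
        (y ^ (θ - 1) ≤ y ^ (θ₁ - 1) + y ^ (θ₂ - 1)) := by
      by_cases hc : x ≤ 1
      · exact ⟨θ₁, ⟨hθ₁0, hθ₁1⟩, by rw [if_pos hc],
          le_add_of_nonneg_right (Real.rpow_pos_of_pos hy0 _).le⟩
      · exact ⟨θ₂, ⟨hθ₂0, hθ₂1⟩, by rw [if_neg hc],
          le_add_of_nonneg_left (Real.rpow_pos_of_pos hy0 _).le⟩
    obtain ⟨θ, ⟨hθ0, hθ1⟩, hφ2eq, hysum⟩ := θcase
    have hinv : (x + y)⁻¹ ≤ x ^ (-θ) * y ^ (θ - 1) := by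
      have hgm : x ^ θ * y ^ (1 - θ) ≤ x + y := by
        calc x ^ θ * y ^ (1 - θ) ≤ θ * x + (1 - θ) * y :=
              Real.geom_mean_le_arith_mean2_weighted hθ0.le (by linarith) hx0.le hy0.le
                (by ring)
          _ ≤ x + y := by nlinarith
      have hpos : (0:ℝ) < x ^ θ * y ^ (1 - θ) := by positivity
      calc (x + y)⁻¹ ≤ (x ^ θ * y ^ (1 - θ))⁻¹ := inv_anti₀ hpos hgm
        _ = x ^ (-θ) * y ^ (θ - 1) := by
            rw [mul_inv, ← Real.rpow_neg hx0.le, ← Real.rpow_neg hy0.le]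
            ring_nf
    have hT2 : |(x ^ (σ₁ - 1) / (x + y))
        * (Real.exp ((1 - 1) * y) / (Real.exp y - 1) - 1 / y) * y ^ (σ₂ - 1)|
        ≤ φ2 x * ψ2 y := by
      rw [abs_mul, abs_mul, abs_of_pos (div_pos hx1 hxy), abs_of_pos hy1]
      have step1 : (x ^ (σ₁ - 1) / (x + y))
            * |Real.exp ((1 - 1) * y) / (Real.exp y - 1) - 1 / y| * y ^ (σ₂ - 1)
          ≤ (x ^ (σ₁ - 1) * (x ^ (-θ) * y ^ (θ - 1))) * min 1 y⁻¹ * y ^ (σ₂ - 1) := by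
        apply mul_le_mul_of_nonneg_right _ hy1.le
        apply mul_le_mul
        · rw [div_eq_mul_inv]
          exact mul_le_mul_of_nonneg_left hinv hx1.le
        · exact habs2
        · exact abs_nonneg _
        · positivity
      refine le_trans step1 ?_
      have hxθ : x ^ (σ₁ - 1) * x ^ (-θ) = x ^ (σ₁ - 1 - θ) := by
        rw [← Real.rpow_add hx0]; ring_nf
      have hφ2x : φ2 x = x ^ (σ₁ - 1 - θ) := by rw [hφ2def]; exact hφ2eq
      have hyθ : y ^ (θ - 1) * min 1 y⁻¹ * y ^ (σ₂ - 1)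
          ≤ (y ^ (θ₁ - 1) + y ^ (θ₂ - 1)) * min 1 y⁻¹ * y ^ (σ₂ - 1) := by
        apply mul_le_mul_of_nonneg_right _ hy1.le
        apply mul_le_mul_of_nonneg_right hysum
        exact le_min zero_le_one (by positivity)
      calc x ^ (σ₁ - 1) * (x ^ (-θ) * y ^ (θ - 1)) * min 1 y⁻¹ * y ^ (σ₂ - 1)
          = x ^ (σ₁ - 1 - θ) * (y ^ (θ - 1) * min 1 y⁻¹ * y ^ (σ₂ - 1)) := by
            rw [← hxθ]; ring
        _ ≤ x ^ (σ₁ - 1 - θ) * ((y ^ (θ₁ - 1) + y ^ (θ₂ - 1)) * min 1 y⁻¹ * y ^ (σ₂ - 1)) := by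
            apply mul_le_mul_of_nonneg_left hyθ (Real.rpow_pos_of_pos hx0 _).le
        _ = φ2 x * ψ2 y := by rw [hφ2x, hψ2def]
    calc |F x y| ≤ |(y ^ (σ₂ - 1) / (Real.exp y - 1))
          * (Real.exp ((1 - a) * (x + y)) / (Real.exp (x + y) - 1) - 1 / (x + y))
          * x ^ (σ₁ - 1)|
        + |(x ^ (σ₁ - 1) / (x + y))
          * (Real.exp ((1 - 1) * y) / (Real.exp y - 1) - 1 / y) * y ^ (σ₂ - 1)| := by
          rw [hF]; exact abs_add_le _ _
      _ ≤ φ1 x * ψ1 y + φ2 x * ψ2 y := add_le_add hT1 hT2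
  -- measurability
  have hmeas : Measurable (fun p : ℝ × ℝ => F p.2 p.1) := by
    rw [hF]
    fun_prop
  -- integrabilities
  have hφ1int : IntegrableOn φ1 (Ioi 0) := dhz_phi1_int σ₁ hσ₁0 hσ₁1
  have hφ2int : IntegrableOn φ2 (Ioi 0) := by
    rw [hφ2def]
    exact dhz_phi2_int _ _ (by rw [hθ₁]; linarith) (by rw [hθ₂]; linarith)
  have hψ1int : IntegrableOn ψ1 (Ioi 0) := dhz_psi1_int σ₂ hσ₂ hσ₂2
  have hψ2int : IntegrableOn ψ2 (Ioi 0) := by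
    rw [hψ2def]
    exact dhz_psi2_int _ _ _ (by rw [hθ₁]; linarith) (by rw [hθ₂]; linarith)
      (by rw [hθ₁]; linarith) (by rw [hθ₂]; linarith)
  have key : Real.Gamma σ₁ * Real.Gamma σ₂ * Z < 0 := by
    rw [hZ]
    exact dhz_outer_neg hmeas hφ1int hφ2int hψ1int hψ2int hbound hneg
  have hΓ1 : 0 < Real.Gamma σ₁ := Real.Gamma_pos_of_pos hσ₁0
  have hΓ2 : 0 < Real.Gamma σ₂ := Real.Gamma_pos_of_pos (by linarith)
  nlinarith [mul_pos hΓ1 hΓ2]
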